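/- arXiv:1905.06506 — 2 statements merged into one kernel-verified Lean document; each statement's English description precedes it below -/
import Mathlib

section
/- Let χ be a quartic Dirichlet character modulo 13 (i.e. χ has exact order 4), and let ψ = χ² be the quadratic character modulo 13. Then for every integer n ≥ 0, ∑_{j=0}^{n} δ_χ(j)·δ_χ(n−j) = −(χ(2)/2)·σ̃_13(n) + ((2 + 3χ(2))/2)·σ̂_13(n), where σ̃_13(0) = −1 and σ̂_13(0) = 0. -/
open Finset

namespace Fk13

/-! ### Integer table layer -/

def tbl : List (List (ℤ × ℤ)) :=
  [[(0,0), (-2,-3), (2,3), (-2,-3), (-2,-3), (2,3), (2,3), (2,3), (2,3), (-2,-3), (-2,-3), (2,3), (-2,-3)],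
     [(-2,-3), (0,-3), (0,-1), (2,-1), (0,-1), (0,1), (0,3), (0,1), (0,-1), (2,-1), (0,-1), (0,-3), (-2,-3)],
     [(2,3), (0,-1), (0,3), (0,1), (0,1), (-2,1), (-2,1), (0,1), (0,1), (0,3), (0,-1), (2,3), (0,-3)],
     [(-2,-3), (2,-1), (0,1), (0,-3), (0,-1), (0,3), (0,-1), (0,-3), (0,1), (2,-1), (-2,-3), (0,-1), (0,-1)],
     [(-2,-3), (0,-1), (0,1), (0,-1), (0,-3), (0,-3), (0,-1), (0,1), (0,-1), (-2,-3), (2,-1), (0,3), (2,-1)],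
     [(2,3), (0,1), (-2,1), (0,3), (0,-3), (0,3), (-2,1), (0,1), (2,3), (0,-1), (0,1), (0,1), (0,-1)],
     [(2,3), (0,3), (-2,1), (0,-1), (0,-1), (-2,1), (0,3), (2,3), (0,1), (0,1), (0,-3), (0,1), (0,1)],
     [(2,3), (0,1), (0,1), (0,-3), (0,1), (0,1), (2,3), (0,3), (-2,1), (0,-1), (0,-1), (-2,1), (0,3)],
     [(2,3), (0,-1), (0,1), (0,1), (0,-1), (2,3), (0,1), (-2,1), (0,3), (0,-3), (0,3), (-2,1), (0,1)],
     [(-2,-3), (2,-1), (0,3), (2,-1), (-2,-3), (0,-1), (0,1), (0,-1), (0,-3), (0,-3), (0,-1), (0,1), (0,-1)],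
     [(-2,-3), (0,-1), (0,-1), (-2,-3), (2,-1), (0,1), (0,-3), (0,-1), (0,3), (0,-1), (0,-3), (0,1), (2,-1)],
     [(2,3), (0,-3), (2,3), (0,-1), (0,3), (0,1), (0,1), (-2,1), (-2,1), (0,1), (0,1), (0,3), (0,-1)],
     [(-2,-3), (-2,-3), (0,-3), (0,-1), (2,-1), (0,-1), (0,1), (0,3), (0,1), (0,-1), (2,-1), (0,-1), (0,-3)]]
def hZ (a b : ZMod 13) : ℤ × ℤ := (tbl.getD a.val []).getD b.val (0,0)

def cv : ZMod 13 → ℤ × ℤ := fun a =>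
  ([(0,0), (1,0), (0,1), (1,0), (-1,0), (0,1), (0,1), (0,-1), (0,-1), (1,0), (-1,0), (0,-1), (-1,0)] :
    List (ℤ × ℤ)).getD a.val (0,0)

def gmul (p q : ℤ × ℤ) : ℤ × ℤ := (p.1*q.1 - p.2*q.2, p.1*q.2 + p.2*q.1)

set_option maxRecDepth 40000 in
theorem rel4Z : ∀ a b : ZMod 13,
    hZ a b + hZ b a - hZ (a-b) b - hZ b (a-b) = gmul (4,0) (gmul (cv a) (cv b)) := by decide

theorem diagZ : ∀ a : ZMod 13, hZ a a = gmul (0,-3) (gmul (cv a) (cv a)) := by decide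

set_option maxRecDepth 40000 in
theorem rowZ : ∀ c : ZMod 13, (∑ r : ZMod 13, hZ r (c - r)) = gmul (0,-13) (gmul (cv c) (cv c)) := by
  decide

/-! ### The complex embedding -/

noncomputable def ee (t : ℂ) : ℤ × ℤ →+ ℂ :=
  AddMonoidHom.mk' (fun p => (p.1 : ℂ) + (p.2 : ℂ) * t)
    (by intro p q; simp only [Prod.fst_add, Prod.snd_add]; push_cast; ring)

lemma ee_apply (t : ℂ) (p q : ℤ) : ee t (p, q) = (p : ℂ) + (q : ℂ) * t := rfl

lemma ee_gmul {t : ℂ} (ht : t^2 = -1) (p q : ℤ × ℤ) :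
    ee t (gmul p q) = ee t p * ee t q := by
  rcases p with ⟨p1, p2⟩; rcases q with ⟨q1, q2⟩
  simp only [gmul, ee_apply]
  push_cast
  linear_combination (-(p2 : ℂ) * q2) * ht

/-! ### Character values -/

variable {χ : DirichletCharacter ℂ 13}

lemma two_pow_exhaust : ∀ a : ZMod 13, a ≠ 0 → ∃ k : Fin 12, a = 2^(k : ℕ) := by decide

lemma chi_two_sq (hχ : orderOf χ = 4) : (χ 2)^2 = -1 := by
  have h4 : χ^4 = 1 := by rw [← hχ]; exact pow_orderOf_eq_one χ
  have hne : χ^2 ≠ 1 := by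
    intro h
    have hd : orderOf χ ∣ 2 := orderOf_dvd_of_pow_eq_one h
    rw [hχ] at hd
    norm_num at hd
  have hv4 : (χ 2)^4 = 1 := by
    have h2 := congrArg (fun φ : DirichletCharacter ℂ 13 => φ 2) h4
    rw [MulChar.pow_apply' χ (by norm_num) 2] at h2
    rw [h2, MulChar.one_apply]
    exact ⟨ZMod.unitOfCoprime 2 (by norm_num), rfl⟩
  have hsplit : ((χ 2)^2 - 1) * ((χ 2)^2 + 1) = 0 := by linear_combination hv4
  rcases mul_eq_zero.mp hsplit with h | h
  · exfalso
    apply hne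
    apply MulChar.ext
    intro u
    haveI : Fact (Nat.Prime 13) := ⟨by norm_num⟩
    have hu0 : (u : ZMod 13) ≠ 0 := Units.ne_zero u
    obtain ⟨k, hk⟩ := two_pow_exhaust _ hu0
    have hpow : (χ^2) (u : ZMod 13) = (χ (u : ZMod 13))^2 :=
      MulChar.pow_apply' χ (by norm_num) _
    rw [MulChar.one_apply u.isUnit, hpow, hk, map_pow, ← pow_mul, mul_comm, pow_mul]
    rw [show (χ 2)^2 = 1 by linear_combination h, one_pow]
  · linear_combination h

lemma chiv0 : χ (0 : ZMod 13) = 0 := by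
  apply MulChar.map_nonunit
  rw [isUnit_zero_iff]
  decide

lemma chiv1 : χ (1 : ZMod 13) = 1 := map_one χ

lemma chiv3 (ht : (χ 2)^2 = -1) : χ (3 : ZMod 13) = 1 := by
  rw [show (3 : ZMod 13) = 2^4 from by decide, map_pow]
  linear_combination ((-1:ℂ) + (1:ℂ) * (χ 2)^2) * ht

lemma chiv4 (ht : (χ 2)^2 = -1) : χ (4 : ZMod 13) = -1 := by
  rw [show (4 : ZMod 13) = 2^2 from by decide, map_pow]
  linear_combination ((1:ℂ)) * ht

lemma chiv5 (ht : (χ 2)^2 = -1) : χ (5 : ZMod 13) = (χ 2) := by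
  rw [show (5 : ZMod 13) = 2^9 from by decide, map_pow]
  linear_combination ((-1:ℂ) * (χ 2) + (1:ℂ) * (χ 2)^3 + (-1:ℂ) * (χ 2)^5 + (1:ℂ) * (χ 2)^7) * ht

lemma chiv6 (ht : (χ 2)^2 = -1) : χ (6 : ZMod 13) = (χ 2) := by
  rw [show (6 : ZMod 13) = 2^5 from by decide, map_pow]
  linear_combination ((-1:ℂ) * (χ 2) + (1:ℂ) * (χ 2)^3) * ht

lemma chiv7 (ht : (χ 2)^2 = -1) : χ (7 : ZMod 13) = -(χ 2) := by
  rw [show (7 : ZMod 13) = 2^11 from by decide, map_pow]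
  linear_combination ((1:ℂ) * (χ 2) + (-1:ℂ) * (χ 2)^3 + (1:ℂ) * (χ 2)^5 + (-1:ℂ) * (χ 2)^7 + (1:ℂ) * (χ 2)^9) * ht

lemma chiv8 (ht : (χ 2)^2 = -1) : χ (8 : ZMod 13) = -(χ 2) := by
  rw [show (8 : ZMod 13) = 2^3 from by decide, map_pow]
  linear_combination ((1:ℂ) * (χ 2)) * ht

lemma chiv9 (ht : (χ 2)^2 = -1) : χ (9 : ZMod 13) = 1 := by
  rw [show (9 : ZMod 13) = 2^8 from by decide, map_pow]
  linear_combination ((-1:ℂ) + (1:ℂ) * (χ 2)^2 + (-1:ℂ) * (χ 2)^4 + (1:ℂ) * (χ 2)^6) * ht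

lemma chiv10 (ht : (χ 2)^2 = -1) : χ (10 : ZMod 13) = -1 := by
  rw [show (10 : ZMod 13) = 2^10 from by decide, map_pow]
  linear_combination ((1:ℂ) + (-1:ℂ) * (χ 2)^2 + (1:ℂ) * (χ 2)^4 + (-1:ℂ) * (χ 2)^6 + (1:ℂ) * (χ 2)^8) * ht

lemma chiv11 (ht : (χ 2)^2 = -1) : χ (11 : ZMod 13) = -(χ 2) := by
  rw [show (11 : ZMod 13) = 2^7 from by decide, map_pow]
  linear_combination ((1:ℂ) * (χ 2) + (-1:ℂ) * (χ 2)^3 + (1:ℂ) * (χ 2)^5) * ht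

lemma chiv12 (ht : (χ 2)^2 = -1) : χ (12 : ZMod 13) = -1 := by
  rw [show (12 : ZMod 13) = 2^6 from by decide, map_pow]
  linear_combination ((1:ℂ) + (-1:ℂ) * (χ 2)^2 + (1:ℂ) * (χ 2)^4) * ht

lemma chi_eq (ht : (χ 2)^2 = -1) (a : ZMod 13) : χ a = ee (χ 2) (cv a) := by
  have hd : ∀ x : ZMod 13, x = 0 ∨ x = 1 ∨ x = 2 ∨ x = 3 ∨ x = 4 ∨ x = 5 ∨ x = 6 ∨ x = 7 ∨
      x = 8 ∨ x = 9 ∨ x = 10 ∨ x = 11 ∨ x = 12 := by decide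
  rcases hd a with rfl|rfl|rfl|rfl|rfl|rfl|rfl|rfl|rfl|rfl|rfl|rfl|rfl
  · rw [chiv0, show cv 0 = ((0 : ℤ), (0 : ℤ)) from by decide, ee_apply]; push_cast; ring
  · rw [chiv1, show cv 1 = ((1 : ℤ), (0 : ℤ)) from by decide, ee_apply]; push_cast; ring
  · rw [show cv 2 = ((0 : ℤ), (1 : ℤ)) from by decide, ee_apply]; push_cast; ring
  · rw [chiv3 ht, show cv 3 = ((1 : ℤ), (0 : ℤ)) from by decide, ee_apply]; push_cast; ring
  · rw [chiv4 ht, show cv 4 = ((-1 : ℤ), (0 : ℤ)) from by decide, ee_apply]; push_cast; ring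
  · rw [chiv5 ht, show cv 5 = ((0 : ℤ), (1 : ℤ)) from by decide, ee_apply]; push_cast; ring
  · rw [chiv6 ht, show cv 6 = ((0 : ℤ), (1 : ℤ)) from by decide, ee_apply]; push_cast; ring
  · rw [chiv7 ht, show cv 7 = ((0 : ℤ), (-1 : ℤ)) from by decide, ee_apply]; push_cast; ring
  · rw [chiv8 ht, show cv 8 = ((0 : ℤ), (-1 : ℤ)) from by decide, ee_apply]; push_cast; ring
  · rw [chiv9 ht, show cv 9 = ((1 : ℤ), (0 : ℤ)) from by decide, ee_apply]; push_cast; ring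
  · rw [chiv10 ht, show cv 10 = ((-1 : ℤ), (0 : ℤ)) from by decide, ee_apply]; push_cast; ring
  · rw [chiv11 ht, show cv 11 = ((0 : ℤ), (-1 : ℤ)) from by decide, ee_apply]; push_cast; ring
  · rw [chiv12 ht, show cv 12 = ((-1 : ℤ), (0 : ℤ)) from by decide, ee_apply]; push_cast; ring
/-! ### Complex-valued h and its properties -/

noncomputable def hC (t : ℂ) (a b : ZMod 13) : ℂ := ee t (hZ a b)

lemma rel4C (ht : (χ 2)^2 = -1) (a b : ZMod 13) :
    hC (χ 2) a b + hC (χ 2) b a - hC (χ 2) (a-b) b - hC (χ 2) b (a-b)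
      = 4 * (χ a * χ b) := by
  have h1 : hC (χ 2) a b + hC (χ 2) b a - hC (χ 2) (a-b) b - hC (χ 2) b (a-b)
      = ee (χ 2) (hZ a b + hZ b a - hZ (a-b) b - hZ b (a-b)) := by
    simp [hC, map_add, map_sub]
  rw [h1, rel4Z a b, ee_gmul ht, ee_gmul ht, ← chi_eq ht a, ← chi_eq ht b]
  rw [show ee (χ 2) ((4:ℤ), (0:ℤ)) = 4 from by rw [ee_apply]; norm_num]

lemma diagC (ht : (χ 2)^2 = -1) (a : ZMod 13) :
    hC (χ 2) a a = -3 * (χ 2) * (χ a * χ a) := by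
  rw [hC, diagZ a, ee_gmul ht, ee_gmul ht, ← chi_eq ht a]
  rw [show ee (χ 2) ((0:ℤ), (-3:ℤ)) = -3 * (χ 2) from by rw [ee_apply]; push_cast; ring]

lemma rowC (ht : (χ 2)^2 = -1) (c : ZMod 13) :
    (∑ r : ZMod 13, hC (χ 2) r (c - r)) = -13 * (χ 2) * (χ c * χ c) := by
  have h1 : (∑ r : ZMod 13, hC (χ 2) r (c - r)) = ee (χ 2) (∑ r : ZMod 13, hZ r (c - r)) :=
    (map_sum (ee (χ 2)) _ _).symm
  rw [h1, rowZ c, ee_gmul ht, ee_gmul ht, ← chi_eq ht c]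
  rw [show ee (χ 2) ((0:ℤ), (-13:ℤ)) = -13 * (χ 2) from by rw [ee_apply]; push_cast; ring]



noncomputable def PC (t : ℂ) (c : ℕ) : ℂ :=
  ∑ a ∈ Finset.Ico 1 c, hC t (a : ZMod 13) (((c - a : ℕ) : ZMod 13))

lemma PC_eq (t : ℂ) (c : ℕ) :
    PC t c = ee t (∑ a ∈ Finset.Ico 1 c, hZ (a : ZMod 13) (((c - a : ℕ) : ZMod 13))) :=
  (map_sum (ee t) _ _).symm

theorem baseZ0 : (∑ a ∈ Finset.Ico (1:ℕ) 0, hZ (a : ZMod 13) (((0:ℕ) - a : ℕ) : ZMod 13)) = (0,0) := by decide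
theorem baseZ1 : (∑ a ∈ Finset.Ico (1:ℕ) 1, hZ (a : ZMod 13) (((1:ℕ) - a : ℕ) : ZMod 13)) = (0,0) := by decide
theorem baseZ2 : (∑ a ∈ Finset.Ico (1:ℕ) 2, hZ (a : ZMod 13) (((2:ℕ) - a : ℕ) : ZMod 13)) = (0,-3) := by decide
theorem baseZ3 : (∑ a ∈ Finset.Ico (1:ℕ) 3, hZ (a : ZMod 13) (((3:ℕ) - a : ℕ) : ZMod 13)) = (0,-2) := by decide
theorem baseZ4 : (∑ a ∈ Finset.Ico (1:ℕ) 4, hZ (a : ZMod 13) (((4:ℕ) - a : ℕ) : ZMod 13)) = (4,1) := by decide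
theorem baseZ5 : (∑ a ∈ Finset.Ico (1:ℕ) 5, hZ (a : ZMod 13) (((5:ℕ) - a : ℕ) : ZMod 13)) = (0,0) := by decide
theorem baseZ6 : (∑ a ∈ Finset.Ico (1:ℕ) 6, hZ (a : ZMod 13) (((6:ℕ) - a : ℕ) : ZMod 13)) = (0,1) := by decide
theorem baseZ7 : (∑ a ∈ Finset.Ico (1:ℕ) 7, hZ (a : ZMod 13) (((7:ℕ) - a : ℕ) : ZMod 13)) = (-4,6) := by decide
theorem baseZ8 : (∑ a ∈ Finset.Ico (1:ℕ) 8, hZ (a : ZMod 13) (((8:ℕ) - a : ℕ) : ZMod 13)) = (-4,7) := by decide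
theorem baseZ9 : (∑ a ∈ Finset.Ico (1:ℕ) 9, hZ (a : ZMod 13) (((9:ℕ) - a : ℕ) : ZMod 13)) = (0,-8) := by decide
theorem baseZ10 : (∑ a ∈ Finset.Ico (1:ℕ) 10, hZ (a : ZMod 13) (((10:ℕ) - a : ℕ) : ZMod 13)) = (4,-5) := by decide
theorem baseZ11 : (∑ a ∈ Finset.Ico (1:ℕ) 11, hZ (a : ZMod 13) (((11:ℕ) - a : ℕ) : ZMod 13)) = (-4,10) := by decide
theorem baseZ12 : (∑ a ∈ Finset.Ico (1:ℕ) 12, hZ (a : ZMod 13) (((12:ℕ) - a : ℕ) : ZMod 13)) = (4,-7) := by decide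
theorem baseZ13 : (∑ a ∈ Finset.Ico (1:ℕ) 13, hZ (a : ZMod 13) (((13:ℕ) - a : ℕ) : ZMod 13)) = (0,0) := by decide
lemma sum_Ico_period (g : ZMod 13 → ℂ) (k : ℕ) :
    ∑ a ∈ Finset.Ico k (k+13), g (a : ZMod 13) = ∑ r : ZMod 13, g r := by
  refine Finset.sum_nbij' (i := fun a => (a : ZMod 13))
    (j := fun r => k + (r - (k : ZMod 13)).val) ?_ ?_ ?_ ?_ ?_
  · intro a _; exact mem_univ _
  · intro r _
    rw [Finset.mem_Ico]
    have := ZMod.val_lt (r - (k : ZMod 13))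
    omega
  · intro a ha
    rw [Finset.mem_Ico] at ha
    have h1 : ((a - k : ℕ) : ZMod 13) = (a : ZMod 13) - (k : ZMod 13) := by
      push_cast [Nat.cast_sub ha.1]; ring
    rw [← h1, ZMod.val_cast_of_lt (by omega)]
    omega
  · intro r _
    push_cast [ZMod.natCast_zmod_val]
    ring
  · intro a _; rfl

lemma PC_formula (ht : (χ 2)^2 = -1) : ∀ c : ℕ,
    PC (χ 2) c = -(χ 2) * (χ (c : ZMod 13) * χ (c : ZMod 13)) * (c : ℂ)
      + (-2 - 2 * χ 2) * χ (c : ZMod 13) + (2 + 3 * χ 2) * (χ (c : ZMod 13) * χ (c : ZMod 13)) := by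
  intro c
  induction c using Nat.strong_induction_on with
  | _ c IH =>
  by_cases hc : c < 14
  · interval_cases c
    · rw [PC_eq (χ 2) 0, baseZ0, ee_apply]
      push_cast
      rw [chiv0]
      linear_combination ((0:ℂ)) * ht
    · rw [PC_eq (χ 2) 1, baseZ1, ee_apply]
      push_cast
      rw [chiv1]
      linear_combination ((0:ℂ)) * ht
    · rw [PC_eq (χ 2) 2, baseZ2, ee_apply]
      push_cast
      linear_combination ((-1:ℂ) * (χ 2)) * ht
    · rw [PC_eq (χ 2) 3, baseZ3, ee_apply]
      push_cast
      rw [chiv3 ht]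
      linear_combination ((0:ℂ)) * ht
    · rw [PC_eq (χ 2) 4, baseZ4, ee_apply]
      push_cast
      rw [chiv4 ht]
      linear_combination ((0:ℂ)) * ht
    · rw [PC_eq (χ 2) 5, baseZ5, ee_apply]
      push_cast
      rw [chiv5 ht]
      linear_combination ((2:ℂ) * (χ 2)) * ht
    · rw [PC_eq (χ 2) 6, baseZ6, ee_apply]
      push_cast
      rw [chiv6 ht]
      linear_combination ((3:ℂ) * (χ 2)) * ht
    · rw [PC_eq (χ 2) 7, baseZ7, ee_apply]
      push_cast
      rw [chiv7 ht]
      linear_combination ((-4:ℂ) + (4:ℂ) * (χ 2)) * ht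
    · rw [PC_eq (χ 2) 8, baseZ8, ee_apply]
      push_cast
      rw [chiv8 ht]
      linear_combination ((-4:ℂ) + (5:ℂ) * (χ 2)) * ht
    · rw [PC_eq (χ 2) 9, baseZ9, ee_apply]
      push_cast
      rw [chiv9 ht]
      linear_combination ((0:ℂ)) * ht
    · rw [PC_eq (χ 2) 10, baseZ10, ee_apply]
      push_cast
      rw [chiv10 ht]
      linear_combination ((0:ℂ)) * ht
    · rw [PC_eq (χ 2) 11, baseZ11, ee_apply]
      push_cast
      rw [chiv11 ht]
      linear_combination ((-4:ℂ) + (8:ℂ) * (χ 2)) * ht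
    · rw [PC_eq (χ 2) 12, baseZ12, ee_apply]
      push_cast
      rw [chiv12 ht]
      linear_combination ((0:ℂ)) * ht
    · rw [PC_eq (χ 2) 13, baseZ13, ee_apply]
      push_cast
      rw [show (13 : ZMod 13) = 0 from by decide, chiv0]
      linear_combination ((0:ℂ)) * ht
  · -- step case
    obtain ⟨d, rfl⟩ : ∃ d, c = d + 13 := ⟨c - 13, by omega⟩
    have hd1 : 1 ≤ d := by omega
    have hsplit : PC (χ 2) (d + 13)
        = (∑ a ∈ Finset.Ico 1 d, hC (χ 2) (a : ZMod 13) (((d + 13 - a : ℕ) : ZMod 13)))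
          + ∑ a ∈ Finset.Ico d (d+13), hC (χ 2) (a : ZMod 13) (((d + 13 - a : ℕ) : ZMod 13)) := by
      rw [PC]
      rw [← Finset.sum_Ico_consecutive _ hd1 (by omega : d ≤ d + 13)]
    have hfirst : (∑ a ∈ Finset.Ico 1 d, hC (χ 2) (a : ZMod 13) (((d + 13 - a : ℕ) : ZMod 13)))
        = PC (χ 2) d := by
      apply Finset.sum_congr rfl
      intro a ha
      rw [Finset.mem_Ico] at ha
      congr 1
      have h2 : d + 13 - a = (d - a) + 13 := by omega
      rw [h2]
      push_cast
      rw [show (13 : ZMod 13) = 0 from by decide]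
      ring
    have hsecond : (∑ a ∈ Finset.Ico d (d+13), hC (χ 2) (a : ZMod 13) (((d + 13 - a : ℕ) : ZMod 13)))
        = -13 * (χ 2) * (χ ((d+13 : ℕ) : ZMod 13) * χ ((d+13 : ℕ) : ZMod 13)) := by
      rw [← rowC ht (((d+13 : ℕ) : ZMod 13))]
      rw [← sum_Ico_period (fun r => hC (χ 2) r (((d+13 : ℕ) : ZMod 13) - r)) d]
      apply Finset.sum_congr rfl
      intro a ha
      rw [Finset.mem_Ico] at ha
      congr 1
      rw [Nat.cast_sub (by omega : a ≤ d + 13)]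
    have hcast : ((d + 13 : ℕ) : ZMod 13) = ((d : ℕ) : ZMod 13) := by
      push_cast
      rw [show (13 : ZMod 13) = 0 from by decide]
      ring
    rw [hsplit, hfirst, hsecond, IH d (by omega), hcast]
    push_cast
    ring

end Fk13


/-! ### Solution sets and bijections -/

def Sol (n : ℕ) : Finset ((ℕ×ℕ)×(ℕ×ℕ)) :=
  ((range (n+1) ×ˢ range (n+1)) ×ˢ (range (n+1) ×ˢ range (n+1))).filter
    (fun p => p.1.1 * p.1.2 + p.2.1 * p.2.2 = n ∧ 0 < p.1.1 ∧ 0 < p.1.2 ∧ 0 < p.2.1 ∧ 0 < p.2.2)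

lemma mem_Sol {n : ℕ} {p : (ℕ×ℕ)×(ℕ×ℕ)} :
    p ∈ Sol n ↔ p.1.1 * p.1.2 + p.2.1 * p.2.2 = n
      ∧ 0 < p.1.1 ∧ 0 < p.1.2 ∧ 0 < p.2.1 ∧ 0 < p.2.2 := by
  obtain ⟨⟨a, x⟩, b, y⟩ := p
  simp only [Sol, Finset.mem_filter, Finset.mem_product, Finset.mem_range]
  constructor
  · rintro ⟨-, h⟩; exact h
  · rintro ⟨he, h1, h2, h3, h4⟩
    have c1 : a ≤ a * x := Nat.le_mul_of_pos_right a h2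
    have c2 : x ≤ a * x := Nat.le_mul_of_pos_left x h1
    have c3 : b ≤ b * y := Nat.le_mul_of_pos_right b h4
    have c4 : y ≤ b * y := Nat.le_mul_of_pos_left y h3
    exact ⟨⟨⟨by omega, by omega⟩, by omega, by omega⟩, he, h1, h2, h3, h4⟩

lemma trisect (s : Finset ((ℕ×ℕ)×(ℕ×ℕ))) (w : ((ℕ×ℕ)×(ℕ×ℕ)) → ℂ)
    (u v : ((ℕ×ℕ)×(ℕ×ℕ)) → ℕ) :
    ∑ p ∈ s, w p
      = ∑ p ∈ s.filter (fun p => u p < v p), w p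
        + ∑ p ∈ s.filter (fun p => v p < u p), w p
        + ∑ p ∈ s.filter (fun p => u p = v p), w p := by
  classical
  rw [← Finset.sum_filter_add_sum_filter_not s (fun p => u p < v p) w]
  rw [← Finset.sum_filter_add_sum_filter_not (s.filter (fun p => ¬ u p < v p))
    (fun p => v p < u p) w]
  rw [Finset.filter_filter, Finset.filter_filter]
  have e1 : s.filter (fun p => ¬ u p < v p ∧ v p < u p) = s.filter (fun p => v p < u p) := by
    ext p; simp only [Finset.mem_filter]; constructor
    · rintro ⟨h, -, h2⟩; exact ⟨h, h2⟩
    · rintro ⟨h, h2⟩; exact ⟨h, by omega, h2⟩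
  have e2 : s.filter (fun p => ¬ u p < v p ∧ ¬ v p < u p) = s.filter (fun p => u p = v p) := by
    ext p; simp only [Finset.mem_filter]; constructor
    · rintro ⟨h, h1, h2⟩; exact ⟨h, by omega⟩
    · rintro ⟨h, h2⟩; exact ⟨h, by omega, by omega⟩
  rw [e1, e2]
  ring

lemma B0 (n : ℕ) (f : ℕ → ℕ → ℂ) :
    ∑ p ∈ (Sol n).filter (fun p => p.1.1 < p.2.1), f p.1.1 p.2.1
      = ∑ p ∈ (Sol n).filter (fun p => p.2.1 < p.1.1), f p.2.1 p.1.1 := by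
  refine Finset.sum_nbij' (i := fun p => (p.2, p.1)) (j := fun p => (p.2, p.1)) ?_ ?_ ?_ ?_ ?_
  · rintro ⟨⟨a,x⟩,⟨b,y⟩⟩ hp
    simp only [Finset.mem_filter, mem_Sol] at hp ⊢
    obtain ⟨⟨he, h1, h2, h3, h4⟩, hlt⟩ := hp
    exact ⟨⟨by omega, h3, h4, h1, h2⟩, hlt⟩
  · rintro ⟨⟨a,x⟩,⟨b,y⟩⟩ hp
    simp only [Finset.mem_filter, mem_Sol] at hp ⊢
    obtain ⟨⟨he, h1, h2, h3, h4⟩, hlt⟩ := hp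
    exact ⟨⟨by omega, h3, h4, h1, h2⟩, hlt⟩
  · rintro ⟨⟨a,x⟩,⟨b,y⟩⟩ _; rfl
  · rintro ⟨⟨a,x⟩,⟨b,y⟩⟩ _; rfl
  · rintro ⟨⟨a,x⟩,⟨b,y⟩⟩ _; rfl

lemma B1 (n : ℕ) (f : ℕ → ℕ → ℂ) :
    ∑ p ∈ (Sol n).filter (fun p => p.1.2 < p.2.2), f p.1.1 p.2.1
      = ∑ p ∈ (Sol n).filter (fun p => p.2.1 < p.1.1), f (p.1.1 - p.2.1) p.2.1 := by
  refine Finset.sum_nbij' (i := fun p => ((p.1.1 + p.2.1, p.1.2), (p.2.1, p.2.2 - p.1.2)))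
    (j := fun p => ((p.1.1 - p.2.1, p.1.2), (p.2.1, p.2.2 + p.1.2))) ?_ ?_ ?_ ?_ ?_
  · rintro ⟨⟨a,x⟩,⟨b,y⟩⟩ hp
    simp only [Finset.mem_filter, mem_Sol] at hp ⊢
    obtain ⟨⟨he, h1, h2, h3, h4⟩, hlt⟩ := hp
    refine ⟨⟨?_, by omega, h2, h3, by omega⟩, by omega⟩
    have h5 : y - x + x = y := by omega
    calc (a+b)*x + b*(y-x) = a*x + b*((y-x) + x) := by ring
    _ = n := by rw [h5]; exact he
  · rintro ⟨⟨A,X⟩,⟨B,Y⟩⟩ hq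
    simp only [Finset.mem_filter, mem_Sol] at hq ⊢
    obtain ⟨⟨he, h1, h2, h3, h4⟩, hlt⟩ := hq
    refine ⟨⟨?_, by omega, h2, h3, by omega⟩, by omega⟩
    have h5 : A - B + B = A := by omega
    calc (A-B)*X + B*(Y+X) = ((A-B) + B)*X + B*Y := by ring
    _ = n := by rw [h5]; exact he
  · rintro ⟨⟨a,x⟩,⟨b,y⟩⟩ hp
    simp only [Finset.mem_filter, mem_Sol] at hp
    obtain ⟨⟨he, h1, h2, h3, h4⟩, hlt⟩ := hp
    show ((a + b - b, x), (b, y - x + x)) = ((a, x), (b, y))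
    rw [show a + b - b = a from by omega, show y - x + x = y from by omega]
  · rintro ⟨⟨A,X⟩,⟨B,Y⟩⟩ hq
    simp only [Finset.mem_filter, mem_Sol] at hq
    obtain ⟨⟨he, h1, h2, h3, h4⟩, hlt⟩ := hq
    show ((A - B + B, X), (B, Y + X - X)) = ((A, X), (B, Y))
    rw [show A - B + B = A from by omega, show Y + X - X = Y from by omega]
  · rintro ⟨⟨a,x⟩,⟨b,y⟩⟩ _
    simp only
    rw [Nat.add_sub_cancel]

lemma B2 (n : ℕ) (f : ℕ → ℕ → ℂ) :
    ∑ p ∈ (Sol n).filter (fun p => p.2.2 < p.1.2), f p.1.1 p.2.1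
      = ∑ p ∈ (Sol n).filter (fun p => p.2.1 < p.1.1), f p.2.1 (p.1.1 - p.2.1) := by
  refine Finset.sum_nbij' (i := fun p => ((p.1.1 + p.2.1, p.2.2), (p.1.1, p.1.2 - p.2.2)))
    (j := fun p => ((p.2.1, p.2.2 + p.1.2), (p.1.1 - p.2.1, p.1.2))) ?_ ?_ ?_ ?_ ?_
  · rintro ⟨⟨a,x⟩,⟨b,y⟩⟩ hp
    simp only [Finset.mem_filter, mem_Sol] at hp ⊢
    obtain ⟨⟨he, h1, h2, h3, h4⟩, hlt⟩ := hp
    refine ⟨⟨?_, by omega, h4, h1, by omega⟩, by omega⟩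
    have h5 : x - y + y = x := by omega
    calc (a+b)*y + a*(x-y) = a*((x-y) + y) + b*y := by ring
    _ = n := by rw [h5]; exact he
  · rintro ⟨⟨A,X⟩,⟨B,Y⟩⟩ hq
    simp only [Finset.mem_filter, mem_Sol] at hq ⊢
    obtain ⟨⟨he, h1, h2, h3, h4⟩, hlt⟩ := hq
    refine ⟨⟨?_, by omega, by omega, by omega, h2⟩, by omega⟩
    have h5 : A - B + B = A := by omega
    calc B*(Y+X) + (A-B)*X = ((A-B) + B)*X + B*Y := by ring
    _ = n := by rw [h5]; exact he
  · rintro ⟨⟨a,x⟩,⟨b,y⟩⟩ hp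
    simp only [Finset.mem_filter, mem_Sol] at hp
    obtain ⟨⟨he, h1, h2, h3, h4⟩, hlt⟩ := hp
    show ((a, x - y + y), (a + b - a, y)) = ((a, x), (b, y))
    rw [show x - y + y = x from by omega, show a + b - a = b from by omega]
  · rintro ⟨⟨A,X⟩,⟨B,Y⟩⟩ hq
    simp only [Finset.mem_filter, mem_Sol] at hq
    obtain ⟨⟨he, h1, h2, h3, h4⟩, hlt⟩ := hq
    show ((B + (A - B), X), (B, Y + X - X)) = ((A, X), (B, Y))
    rw [show B + (A - B) = A from by omega, show Y + X - X = Y from by omega]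
  · rintro ⟨⟨a,x⟩,⟨b,y⟩⟩ _
    simp only
    rw [Nat.add_sub_cancel_left]

lemma Dlem (n : ℕ) (f : ℕ → ℕ → ℂ) :
    ∑ p ∈ (Sol n).filter (fun p => p.1.2 = p.2.2), f p.1.1 p.2.1
      = ∑ q ∈ n.divisorsAntidiagonal.sigma (fun cm => Finset.Ico 1 cm.1), f q.2 (q.1.1 - q.2) := by
  refine Finset.sum_nbij' (i := fun p => (⟨(p.1.1 + p.2.1, p.1.2), p.1.1⟩ : Σ _ : ℕ×ℕ, ℕ))
    (j := fun q => ((q.2, q.1.2), (q.1.1 - q.2, q.1.2))) ?_ ?_ ?_ ?_ ?_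
  · rintro ⟨⟨a,x⟩,⟨b,y⟩⟩ hp
    simp only [Finset.mem_filter, mem_Sol] at hp
    obtain ⟨⟨he, h1, h2, h3, h4⟩, hxy⟩ := hp
    subst hxy
    simp only [Finset.mem_sigma, Nat.mem_divisorsAntidiagonal, Finset.mem_Ico]
    have hax : 0 < a * x := Nat.mul_pos h1 h2
    refine ⟨⟨?_, ?_⟩, h1, by omega⟩
    · calc (a+b)*x = a*x + b*x := by ring
      _ = n := he
    · omega
  · rintro ⟨⟨c,m⟩, a⟩ hq
    simp only [Finset.mem_sigma, Nat.mem_divisorsAntidiagonal, Finset.mem_Ico] at hq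
    obtain ⟨⟨he, hn0⟩, ha1, hac⟩ := hq
    simp only [mem_Sol, Finset.mem_filter]
    have hm : 0 < m := by
      rcases Nat.eq_zero_or_pos m with rfl | h
      · simp at he; omega
      · exact h
    refine ⟨⟨?_, ha1, hm, by omega, hm⟩, trivial⟩
    calc a*m + (c-a)*m = (a + (c-a))*m := by ring
    _ = n := by rw [show a + (c-a) = c from by omega]; exact he
  · rintro ⟨⟨a,x⟩,⟨b,y⟩⟩ hp
    simp only [Finset.mem_filter, mem_Sol] at hp
    obtain ⟨⟨he, h1, h2, h3, h4⟩, hxy⟩ := hp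
    show ((a, x), (a + b - a, x)) = ((a, x), (b, y))
    rw [show a + b - a = b from by omega, hxy]
  · rintro ⟨⟨c,m⟩, a⟩ hq
    simp only [Finset.mem_sigma, Nat.mem_divisorsAntidiagonal, Finset.mem_Ico] at hq
    obtain ⟨⟨he, hn0⟩, ha1, hac⟩ := hq
    show (⟨(a + (c - a), m), a⟩ : Σ _ : ℕ×ℕ, ℕ) = ⟨(c, m), a⟩
    rw [show a + (c - a) = c from by omega]
  · rintro ⟨⟨a,x⟩,⟨b,y⟩⟩ _
    simp only
    rw [Nat.add_sub_cancel_left]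

lemma Elem (n : ℕ) (f : ℕ → ℂ) :
    ∑ p ∈ (Sol n).filter (fun p => p.1.1 = p.2.1), f p.1.1
      = ∑ q ∈ n.divisorsAntidiagonal.sigma (fun am => Finset.Ico 1 am.2), f q.1.1 := by
  refine Finset.sum_nbij' (i := fun p => (⟨(p.1.1, p.1.2 + p.2.2), p.1.2⟩ : Σ _ : ℕ×ℕ, ℕ))
    (j := fun q => ((q.1.1, q.2), (q.1.1, q.1.2 - q.2))) ?_ ?_ ?_ ?_ ?_
  · rintro ⟨⟨a,x⟩,⟨b,y⟩⟩ hp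
    simp only [Finset.mem_filter, mem_Sol] at hp
    obtain ⟨⟨he, h1, h2, h3, h4⟩, hab⟩ := hp
    subst hab
    simp only [Finset.mem_sigma, Nat.mem_divisorsAntidiagonal, Finset.mem_Ico]
    have hax : 0 < a * x := Nat.mul_pos h1 h2
    refine ⟨⟨?_, ?_⟩, h2, by omega⟩
    · calc a*(x+y) = a*x + a*y := by ring
      _ = n := he
    · omega
  · rintro ⟨⟨a,m⟩, x⟩ hq
    simp only [Finset.mem_sigma, Nat.mem_divisorsAntidiagonal, Finset.mem_Ico] at hq
    obtain ⟨⟨he, hn0⟩, hx1, hxm⟩ := hq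
    simp only [mem_Sol, Finset.mem_filter]
    have ha : 0 < a := by
      rcases Nat.eq_zero_or_pos a with rfl | h
      · simp at he; omega
      · exact h
    refine ⟨⟨?_, ha, hx1, ha, by omega⟩, trivial⟩
    calc a*x + a*(m-x) = a*(x + (m-x)) := by ring
    _ = n := by rw [show x + (m-x) = m from by omega]; exact he
  · rintro ⟨⟨a,x⟩,⟨b,y⟩⟩ hp
    simp only [Finset.mem_filter, mem_Sol] at hp
    obtain ⟨⟨he, h1, h2, h3, h4⟩, hab⟩ := hp
    show ((a, x), (a, x + y - x)) = ((a, x), (b, y))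
    rw [show x + y - x = y from by omega, hab]
  · rintro ⟨⟨a,m⟩, x⟩ hq
    simp only [Finset.mem_sigma, Nat.mem_divisorsAntidiagonal, Finset.mem_Ico] at hq
    obtain ⟨⟨he, hn0⟩, hx1, hxm⟩ := hq
    show (⟨(a, x + (m - x)), x⟩ : Σ _ : ℕ×ℕ, ℕ) = ⟨(a, m), x⟩
    rw [show x + (m - x) = m from by omega]
  · rintro ⟨⟨a,x⟩,⟨b,y⟩⟩ _
    rfl


/-! ### Final assembly -/

/-- `δ_χ(n) = ∑_{0<d∣n} χ(d)` for `n ≥ 1`, and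
`δ_χ(0) = −(1/(2N)) ∑_{a=1}^{N−1} χ(a)·a`. -/
noncomputable def deltaChar {N : ℕ} (χ : DirichletCharacter ℂ N) (n : ℕ) : ℂ :=
  if n = 0 then -(1 / (2 * (N : ℂ))) * ∑ a ∈ Finset.range N, χ a * a
  else ∑ d ∈ n.divisors, χ d

/-- `σ̃_p(n) = ∑_{0<d∣n} ψ(d)·d` for `n ≥ 1`, with prescribed value `c` at `n = 0`. -/
noncomputable def sigmaTilde {N : ℕ} (ψ : DirichletCharacter ℂ N) (c : ℂ) (n : ℕ) : ℂ :=
  if n = 0 then c else ∑ d ∈ n.divisors, ψ d * d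

/-- `σ̂_p(n) = ∑_{0<d∣n} ψ(d)·(n/d)` for `n ≥ 1`, and `σ̂_p(0) = 0`. -/
noncomputable def sigmaHat {N : ℕ} (ψ : DirichletCharacter ℂ N) (n : ℕ) : ℂ :=
  if n = 0 then 0 else ∑ d ∈ n.divisors, ψ d * ((n / d : ℕ) : ℂ)

open Fk13 in
lemma delta0 {χ : DirichletCharacter ℂ 13} (ht : (χ 2)^2 = -1) :
    deltaChar χ 0 = (1 + χ 2) / 2 := by
  rw [deltaChar, if_pos rfl]
  have hs : (∑ a ∈ Finset.range 13, (χ a : ℂ) * a) = -13 - 13 * χ 2 := by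
    simp only [Finset.sum_range_succ, Finset.sum_range_zero]
    push_cast
    rw [chiv0, chiv1, chiv3 ht, chiv4 ht, chiv5 ht, chiv6 ht, chiv7 ht, chiv8 ht,
      chiv9 ht, chiv10 ht, chiv11 ht, chiv12 ht]
    ring
  rw [hs]
  push_cast
  field_simp
  ring

lemma conv_eq {χ : DirichletCharacter ℂ 13} {n : ℕ} (hn : 0 < n) :
    ∑ j ∈ Finset.Ico 1 n, (∑ d ∈ j.divisors, (χ d : ℂ)) * (∑ d ∈ (n-j).divisors, (χ d : ℂ))
      = ∑ p ∈ Sol n, (χ p.1.1 * χ p.2.1 : ℂ) := by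
  have step1 : ∀ j ∈ Finset.Ico 1 n,
      (∑ d ∈ j.divisors, (χ d : ℂ)) * (∑ d ∈ (n-j).divisors, (χ d : ℂ))
        = ∑ q ∈ j.divisorsAntidiagonal ×ˢ (n-j).divisorsAntidiagonal,
            (χ q.1.1 * χ q.2.1 : ℂ) := by
    intro j _
    rw [Finset.sum_product, ← Nat.sum_divisorsAntidiagonal (fun a _ => (χ a : ℂ)) (n := j),
      ← Nat.sum_divisorsAntidiagonal (fun a _ => (χ a : ℂ)) (n := n - j), Finset.sum_mul_sum]
  rw [Finset.sum_congr rfl step1, Finset.sum_sigma']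
  refine Finset.sum_nbij' (i := fun q => q.2) (j := fun p => ⟨p.1.1 * p.1.2, p⟩) ?_ ?_ ?_ ?_ ?_
  · rintro ⟨j, ⟨⟨da, dx⟩, ⟨db, dy⟩⟩⟩ hq
    simp only [Finset.mem_sigma, Finset.mem_Ico, Finset.mem_product,
      Nat.mem_divisorsAntidiagonal] at hq
    obtain ⟨⟨hj1, hjn⟩, ⟨hda, hj0⟩, hdb, hnj0⟩ := hq
    rw [mem_Sol]
    dsimp only
    have h1 : da ≠ 0 ∧ dx ≠ 0 := Nat.mul_ne_zero_iff.mp (by omega)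
    have h2 : db ≠ 0 ∧ dy ≠ 0 := Nat.mul_ne_zero_iff.mp (by omega)
    exact ⟨by omega, by omega, by omega, by omega, by omega⟩
  · rintro ⟨⟨a,x⟩,⟨b,y⟩⟩ hp
    rw [mem_Sol] at hp
    dsimp only at hp
    obtain ⟨he, h1, h2, h3, h4⟩ := hp
    have hax : 0 < a*x := Nat.mul_pos h1 h2
    have hby : 0 < b*y := Nat.mul_pos h3 h4
    simp only [Finset.mem_sigma, Finset.mem_Ico, Finset.mem_product,
      Nat.mem_divisorsAntidiagonal]
    refine ⟨⟨?_, ?_⟩, ⟨?_, ?_⟩, ?_, ?_⟩ <;> first | trivial | omega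
  · rintro ⟨j, ⟨⟨da, dx⟩, ⟨db, dy⟩⟩⟩ hq
    simp only [Finset.mem_sigma, Finset.mem_product, Nat.mem_divisorsAntidiagonal] at hq
    obtain ⟨-, ⟨hda, -⟩, -⟩ := hq
    show (⟨da * dx, ((da, dx), (db, dy))⟩ : Σ _ : ℕ, (ℕ×ℕ)×(ℕ×ℕ)) = ⟨j, _⟩
    rw [hda]
  · rintro p _; rfl
  · rintro q _; rfl

lemma SIG {n : ℕ} (g : ℕ → ℂ) :
    ∑ q ∈ (n.divisorsAntidiagonal.sigma fun am => Finset.Ico 1 am.2), g q.1.1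
      = ∑ d ∈ n.divisors, g d * ((n / d : ℕ) : ℂ) - ∑ d ∈ n.divisors, g d := by
  rw [Finset.sum_sigma]
  have step : ∀ am ∈ n.divisorsAntidiagonal,
      (∑ _x ∈ Finset.Ico 1 am.2, g am.1) = g am.1 * (am.2 : ℂ) - g am.1 := by
    intro am ham
    rw [Nat.mem_divisorsAntidiagonal] at ham
    have hm : 1 ≤ am.2 := by
      rcases Nat.eq_zero_or_pos am.2 with h | h
      · rw [h, mul_zero] at ham; omega
      · exact h
    rw [Finset.sum_const, Nat.card_Ico, nsmul_eq_mul]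
    have : ((am.2 - 1 : ℕ) : ℂ) = (am.2 : ℂ) - 1 := by
      push_cast [Nat.cast_sub hm]; ring
    rw [this]; ring
  rw [Finset.sum_congr rfl step, Finset.sum_sub_distrib]
  congr 1
  · exact Nat.sum_divisorsAntidiagonal (fun a m => g a * (m : ℂ))
  · exact Nat.sum_divisorsAntidiagonal (fun a _ => g a)

theorem farkas_quartic_p13_second (χ : DirichletCharacter ℂ 13) (hχ : orderOf χ = 4) (n : ℕ) :
    ∑ j ∈ Finset.range (n + 1), deltaChar χ j * deltaChar χ (n - j)
      = -(χ 2 / 2) * sigmaTilde (χ ^ 2) (-1) n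
        + ((2 + 3 * χ 2) / 2) * sigmaHat (χ ^ 2) n := by
  have ht : (χ 2)^2 = -1 := Fk13.chi_two_sq hχ
  have hψ : ∀ x : ZMod 13, ((χ^2) x : ℂ) = χ x * χ x := by
    intro x
    rw [MulChar.pow_apply' χ (by norm_num) x]
    ring
  rcases Nat.eq_zero_or_pos n with rfl | hn
  · rw [show (0+1) = 1 from rfl, Finset.range_one, Finset.sum_singleton]
    rw [sigmaTilde, sigmaHat, if_pos rfl, if_pos rfl]
    rw [show (0 - 0 : ℕ) = 0 from rfl, delta0 ht]
    linear_combination (1/4 : ℂ) * ht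
  · have h0notin : (0:ℕ) ∉ insert n (Finset.Ico 1 n) := by
      simp only [Finset.mem_insert, Finset.mem_Ico]; omega
    have hnnotin : n ∉ Finset.Ico 1 n := by simp only [Finset.mem_Ico]; omega
    have hsplit : Finset.range (n+1) = insert 0 (insert n (Finset.Ico 1 n)) := by
      ext m; simp only [Finset.mem_range, Finset.mem_insert, Finset.mem_Ico]; omega
    rw [hsplit, Finset.sum_insert h0notin, Finset.sum_insert hnnotin, Nat.sub_zero, Nat.sub_self]
    have hdn : deltaChar χ n = ∑ d ∈ n.divisors, (χ d : ℂ) := by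
      rw [deltaChar, if_neg (by omega)]
    have hcore : ∑ j ∈ Finset.Ico 1 n, deltaChar χ j * deltaChar χ (n - j)
        = ∑ p ∈ Sol n, (χ p.1.1 * χ p.2.1 : ℂ) := by
      rw [← conv_eq hn]
      apply Finset.sum_congr rfl
      intro j hj
      rw [Finset.mem_Ico] at hj
      rw [deltaChar, if_neg (by omega), deltaChar, if_neg (by omega)]
    rw [delta0 ht, hdn, hcore]
    rw [sigmaTilde, if_neg (by omega), sigmaHat, if_neg (by omega)]
    have hσt : (∑ d ∈ n.divisors, ((χ^2) d : ℂ) * d) = ∑ d ∈ n.divisors, (χ d * χ d : ℂ) * d :=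
      Finset.sum_congr rfl (fun d _ => by rw [hψ])
    have hσh : (∑ d ∈ n.divisors, ((χ^2) d : ℂ) * ((n / d : ℕ) : ℂ))
        = ∑ d ∈ n.divisors, (χ d * χ d : ℂ) * ((n / d : ℕ) : ℂ) :=
      Finset.sum_congr rfl (fun d _ => by rw [hψ])
    rw [hσt, hσh]
    have triF : (∑ p ∈ Sol n, (χ p.1.1 * χ p.2.1 : ℂ))
        = (∑ p ∈ (Sol n).filter (fun p => p.1.1 < p.2.1), (χ p.1.1 * χ p.2.1 : ℂ))
          + (∑ p ∈ (Sol n).filter (fun p => p.2.1 < p.1.1), (χ p.1.1 * χ p.2.1 : ℂ))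
          + (∑ p ∈ (Sol n).filter (fun p => p.1.1 = p.2.1), (χ p.1.1 * χ p.2.1 : ℂ)) :=
      trisect (Sol n) _ (fun p => p.1.1) (fun p => p.2.1)
    have cF1 : (∑ p ∈ (Sol n).filter (fun p => p.1.1 < p.2.1), (χ p.1.1 * χ p.2.1 : ℂ))
        = ∑ p ∈ (Sol n).filter (fun p => p.2.1 < p.1.1), (χ p.1.1 * χ p.2.1 : ℂ) := by
      rw [B0 n (fun a b => (χ a * χ b : ℂ))]
      exact Finset.sum_congr rfl (fun p _ => mul_comm _ _)
    have cF2 : (∑ p ∈ (Sol n).filter (fun p => p.1.1 = p.2.1), (χ p.1.1 * χ p.2.1 : ℂ))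
        = (∑ d ∈ n.divisors, (χ d * χ d : ℂ) * ((n / d : ℕ) : ℂ))
          - ∑ d ∈ n.divisors, (χ d * χ d : ℂ) := by
      rw [← SIG (fun d => (χ d * χ d : ℂ)), ← Elem n (fun a => (χ a * χ a : ℂ))]
      apply Finset.sum_congr rfl
      intro p hp
      rw [Finset.mem_filter] at hp
      rw [hp.2]
    have trh1 : (∑ p ∈ Sol n, Fk13.hC (χ 2) p.1.1 p.2.1)
        = (∑ p ∈ (Sol n).filter (fun p => p.1.1 < p.2.1), Fk13.hC (χ 2) p.1.1 p.2.1)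
          + (∑ p ∈ (Sol n).filter (fun p => p.2.1 < p.1.1), Fk13.hC (χ 2) p.1.1 p.2.1)
          + (∑ p ∈ (Sol n).filter (fun p => p.1.1 = p.2.1), Fk13.hC (χ 2) p.1.1 p.2.1) :=
      trisect (Sol n) _ (fun p => p.1.1) (fun p => p.2.1)
    have trh2 : (∑ p ∈ Sol n, Fk13.hC (χ 2) p.1.1 p.2.1)
        = (∑ p ∈ (Sol n).filter (fun p => p.1.2 < p.2.2), Fk13.hC (χ 2) p.1.1 p.2.1)
          + (∑ p ∈ (Sol n).filter (fun p => p.2.2 < p.1.2), Fk13.hC (χ 2) p.1.1 p.2.1)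
          + (∑ p ∈ (Sol n).filter (fun p => p.1.2 = p.2.2), Fk13.hC (χ 2) p.1.1 p.2.1) :=
      trisect (Sol n) _ (fun p => p.1.2) (fun p => p.2.2)
    have ch1 : (∑ p ∈ (Sol n).filter (fun p => p.1.1 < p.2.1), Fk13.hC (χ 2) p.1.1 p.2.1)
        = ∑ p ∈ (Sol n).filter (fun p => p.2.1 < p.1.1), Fk13.hC (χ 2) p.2.1 p.1.1 :=
      B0 n (fun a b => Fk13.hC (χ 2) a b)
    have ch2 : (∑ p ∈ (Sol n).filter (fun p => p.1.1 = p.2.1), Fk13.hC (χ 2) p.1.1 p.2.1)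
        = -3 * χ 2 * ((∑ d ∈ n.divisors, (χ d * χ d : ℂ) * ((n / d : ℕ) : ℂ))
            - ∑ d ∈ n.divisors, (χ d * χ d : ℂ)) := by
      have e1 : (∑ p ∈ (Sol n).filter (fun p => p.1.1 = p.2.1), Fk13.hC (χ 2) p.1.1 p.2.1)
          = ∑ p ∈ (Sol n).filter (fun p => p.1.1 = p.2.1), Fk13.hC (χ 2) p.1.1 p.1.1 := by
        apply Finset.sum_congr rfl
        intro p hp
        rw [Finset.mem_filter] at hp
        rw [← hp.2]
      rw [e1, Elem n (fun a => Fk13.hC (χ 2) a a), SIG (fun d => Fk13.hC (χ 2) d d)]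
      have e2 : ∀ d ∈ n.divisors, Fk13.hC (χ 2) (d : ZMod 13) (d : ZMod 13) * ((n / d : ℕ) : ℂ)
          = -3 * χ 2 * ((χ d * χ d : ℂ) * ((n / d : ℕ) : ℂ)) := by
        intro d _
        rw [Fk13.diagC ht]
        ring
      have e3 : ∀ d ∈ n.divisors, Fk13.hC (χ 2) (d : ZMod 13) (d : ZMod 13)
          = -3 * χ 2 * (χ d * χ d : ℂ) := by
        intro d _
        rw [Fk13.diagC ht]
      rw [Finset.sum_congr rfl e2, Finset.sum_congr rfl e3, ← Finset.mul_sum, ← Finset.mul_sum]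
      ring
    have cB1 : (∑ p ∈ (Sol n).filter (fun p => p.1.2 < p.2.2), Fk13.hC (χ 2) p.1.1 p.2.1)
        = ∑ p ∈ (Sol n).filter (fun p => p.2.1 < p.1.1),
            Fk13.hC (χ 2) ((p.1.1 - p.2.1 : ℕ) : ZMod 13) p.2.1 :=
      B1 n (fun a b => Fk13.hC (χ 2) a b)
    have cB2 : (∑ p ∈ (Sol n).filter (fun p => p.2.2 < p.1.2), Fk13.hC (χ 2) p.1.1 p.2.1)
        = ∑ p ∈ (Sol n).filter (fun p => p.2.1 < p.1.1),
            Fk13.hC (χ 2) p.2.1 ((p.1.1 - p.2.1 : ℕ) : ZMod 13) :=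
      B2 n (fun a b => Fk13.hC (χ 2) a b)
    have cD : (∑ p ∈ (Sol n).filter (fun p => p.1.2 = p.2.2), Fk13.hC (χ 2) p.1.1 p.2.1)
        = -(χ 2) * (∑ d ∈ n.divisors, (χ d * χ d : ℂ) * d)
          + (-2 - 2*χ 2) * (∑ d ∈ n.divisors, (χ d : ℂ))
          + (2 + 3*χ 2) * (∑ d ∈ n.divisors, (χ d * χ d : ℂ)) := by
      rw [Dlem n (fun a b => Fk13.hC (χ 2) a b), Finset.sum_sigma]
      have e1 : ∀ cm ∈ n.divisorsAntidiagonal,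
          (∑ a ∈ Finset.Ico 1 cm.1,
              Fk13.hC (χ 2) ((a : ℕ) : ZMod 13) ((cm.1 - a : ℕ) : ZMod 13))
            = -(χ 2) * ((χ cm.1 * χ cm.1 : ℂ) * (cm.1 : ℂ)) + (-2 - 2*χ 2) * (χ cm.1 : ℂ)
              + (2 + 3*χ 2) * (χ cm.1 * χ cm.1 : ℂ) := by
        intro cm _
        have hf := Fk13.PC_formula (χ := χ) ht cm.1
        rw [show Fk13.PC (χ 2) cm.1 = (∑ a ∈ Finset.Ico 1 cm.1,
          Fk13.hC (χ 2) ((a : ℕ) : ZMod 13) ((cm.1 - a : ℕ) : ZMod 13)) from rfl] at hf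
        rw [hf]
        ring
      rw [Finset.sum_congr rfl e1, Finset.sum_add_distrib, Finset.sum_add_distrib]
      have f1 : (∑ cm ∈ n.divisorsAntidiagonal, -(χ 2) * ((χ cm.1 * χ cm.1 : ℂ) * (cm.1 : ℂ)))
          = -(χ 2) * ∑ d ∈ n.divisors, (χ d * χ d : ℂ) * (d : ℂ) := by
        rw [← Finset.mul_sum]
        congr 1
        exact Nat.sum_divisorsAntidiagonal (fun a _ => (χ a * χ a : ℂ) * (a : ℂ))
      have f2 : (∑ cm ∈ n.divisorsAntidiagonal, (-2 - 2*χ 2) * (χ cm.1 : ℂ))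
          = (-2 - 2*χ 2) * ∑ d ∈ n.divisors, (χ d : ℂ) := by
        rw [← Finset.mul_sum]
        congr 1
        exact Nat.sum_divisorsAntidiagonal (fun a _ => (χ a : ℂ))
      have f3 : (∑ cm ∈ n.divisorsAntidiagonal, (2 + 3*χ 2) * (χ cm.1 * χ cm.1 : ℂ))
          = (2 + 3*χ 2) * ∑ d ∈ n.divisors, (χ d * χ d : ℂ) := by
        rw [← Finset.mul_sum]
        congr 1
        exact Nat.sum_divisorsAntidiagonal (fun a _ => (χ a * χ a : ℂ))
      rw [f1, f2, f3]
    have hpt : ∀ p ∈ (Sol n).filter (fun p => p.2.1 < p.1.1),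
        Fk13.hC (χ 2) p.1.1 p.2.1 + Fk13.hC (χ 2) p.2.1 p.1.1
          - Fk13.hC (χ 2) ((p.1.1 - p.2.1 : ℕ) : ZMod 13) p.2.1
          - Fk13.hC (χ 2) p.2.1 ((p.1.1 - p.2.1 : ℕ) : ZMod 13)
          = 4 * (χ p.1.1 * χ p.2.1 : ℂ) := by
      intro p hp
      rw [Finset.mem_filter] at hp
      have hba : p.2.1 ≤ p.1.1 := le_of_lt hp.2
      have hc : ((p.1.1 - p.2.1 : ℕ) : ZMod 13) = (p.1.1 : ZMod 13) - (p.2.1 : ZMod 13) := by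
        push_cast [Nat.cast_sub hba]
        ring
      rw [hc]
      exact Fk13.rel4C ht _ _
    have h4S : (∑ p ∈ (Sol n).filter (fun p => p.2.1 < p.1.1), (4 : ℂ) * (χ p.1.1 * χ p.2.1))
        = (∑ p ∈ (Sol n).filter (fun p => p.2.1 < p.1.1), Fk13.hC (χ 2) p.1.1 p.2.1)
          + (∑ p ∈ (Sol n).filter (fun p => p.2.1 < p.1.1), Fk13.hC (χ 2) p.2.1 p.1.1)
          - (∑ p ∈ (Sol n).filter (fun p => p.2.1 < p.1.1),
              Fk13.hC (χ 2) ((p.1.1 - p.2.1 : ℕ) : ZMod 13) p.2.1)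
          - (∑ p ∈ (Sol n).filter (fun p => p.2.1 < p.1.1),
              Fk13.hC (χ 2) p.2.1 ((p.1.1 - p.2.1 : ℕ) : ZMod 13)) := by
      rw [← Finset.sum_congr rfl hpt, Finset.sum_sub_distrib, Finset.sum_sub_distrib,
        Finset.sum_add_distrib]
    have hS4 : (∑ p ∈ (Sol n).filter (fun p => p.2.1 < p.1.1), (4 : ℂ) * (χ p.1.1 * χ p.2.1))
        = 4 * ∑ p ∈ (Sol n).filter (fun p => p.2.1 < p.1.1), (χ p.1.1 * χ p.2.1 : ℂ) := by
      rw [Finset.mul_sum]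
    linear_combination triF + cF1 + cF2 - (1/2 : ℂ)*trh1 + (1/2 : ℂ)*trh2 - (1/2 : ℂ)*ch1
      - (1/2 : ℂ)*ch2 + (1/2 : ℂ)*cB1 + (1/2 : ℂ)*cB2 + (1/2 : ℂ)*cD + (1/2 : ℂ)*h4S
      - (1/2 : ℂ)*hS4
end

section
/- Let q ≡ 1 (mod 4) be a prime such that p = 2q + 1 is also prime, and let χ be an even Dirichlet character modulo p (i.e. χ(−1) = 1). Then there is no real number α such that ∑_{j=0}^{n} δ_χ(j)·δ_{χ̄}(n−j) = α·σ'_p(n) holds for all integers n ≥ 1. -/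
open Finset

/-- The complex-conjugate character `χ̄`. -/
noncomputable def conjChar {N : ℕ} (χ : DirichletCharacter ℂ N) : DirichletCharacter ℂ N :=
  χ.ringHomComp (starRingEnd ℂ)

/-- `σ'_p(n) = ∑_{0<d∣n, p∤d} d` for `n ≥ 1`. -/
noncomputable def sigma'pos (p : ℕ) (n : ℕ) : ℂ :=
  ∑ d ∈ n.divisors.filter (fun d => ¬ p ∣ d), (d : ℂ)

lemma deltaChar_one' {N : ℕ} (χ : DirichletCharacter ℂ N) : deltaChar χ 1 = 1 := by
  simp [deltaChar, Nat.divisors_one]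

lemma deltaChar_two' {N : ℕ} (χ : DirichletCharacter ℂ N) : deltaChar χ 2 = 1 + χ 2 := by
  rw [deltaChar, if_neg (by norm_num), Nat.Prime.divisors Nat.prime_two,
    Finset.sum_pair (by norm_num : (1:ℕ) ≠ 2)]
  simp

lemma sigma'pos_one' {p : ℕ} (hp : 2 < p) : sigma'pos p 1 = 1 := by
  have h1 : ¬ p ∣ 1 := fun h => by have := Nat.le_of_dvd one_pos h; omega
  rw [sigma'pos, Nat.divisors_one, Finset.filter_singleton, if_pos h1, Finset.sum_singleton,
    Nat.cast_one]

lemma sigma'pos_two' {p : ℕ} (hp : 2 < p) : sigma'pos p 2 = 3 := by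
  have h1 : ¬ p ∣ 1 := fun h => by have := Nat.le_of_dvd one_pos h; omega
  have h2 : ¬ p ∣ 2 := fun h => by have := Nat.le_of_dvd two_pos h; omega
  rw [sigma'pos, Nat.Prime.divisors Nat.prime_two, Finset.filter_insert, if_pos h1,
    Finset.filter_singleton, if_pos h2, Finset.sum_pair (by norm_num : (1:ℕ) ≠ 2)]
  norm_num

lemma conjChar_apply {N : ℕ} (χ : DirichletCharacter ℂ N) (a : ZMod N) :
    conjChar χ a = (starRingEnd ℂ) (χ a) := rfl

lemma deltaChar_conj_zero {N : ℕ} (χ : DirichletCharacter ℂ N) :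
    deltaChar (conjChar χ) 0 = (starRingEnd ℂ) (deltaChar χ 0) := by
  simp [deltaChar, conjChar, map_sum, map_mul, map_neg, map_div₀, map_ofNat]

lemma S_eq_zero {p : ℕ} (hp : 1 < p) (χ : DirichletCharacter ℂ p) (heven : χ (-1) = 1)
    (hne : χ ≠ 1) : ∑ a ∈ Finset.range p, χ a * a = 0 := by
  haveI : NeZero p := ⟨by omega⟩
  haveI : Fact (1 < p) := ⟨hp⟩
  have h01 : (0 : ZMod p) ≠ 1 := by
    intro h
    have := congrArg ZMod.val h
    rw [ZMod.val_zero, ZMod.val_one] at this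
    omega
  have hzero : χ 0 = 0 := χ.map_nonunit (by rw [isUnit_zero_iff]; exact h01)
  have hneg : ∀ b : ZMod p, χ (-b) = χ b := fun b => by
    rw [neg_eq_neg_one_mul, map_mul, heven, one_mul]
  have hcast : ∑ a ∈ Finset.range p, χ a * (a : ℂ)
      = ∑ b : ZMod p, χ b * (b.val : ℂ) := by
    refine Finset.sum_nbij' (fun a => (a : ZMod p)) (fun b => b.val) ?_ ?_ ?_ ?_ ?_
    · intro a _; exact Finset.mem_univ _
    · intro b _; exact Finset.mem_range.mpr (ZMod.val_lt b)
    · intro a ha; exact ZMod.val_cast_of_lt (Finset.mem_range.mp ha)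
    · intro b _; exact ZMod.natCast_rightInverse b
    · intro a ha; rw [ZMod.val_cast_of_lt (Finset.mem_range.mp ha)]
  rw [hcast]
  set T := ∑ b : ZMod p, χ b * (b.val : ℂ) with hTdef
  have hsum0 : ∑ b : ZMod p, χ b = 0 := MulChar.sum_eq_zero_of_ne_one hne
  have hrefl : ∑ b : ZMod p, χ (-b) * (((-b) : ZMod p).val : ℂ) = T :=
    Fintype.sum_equiv (Equiv.neg (ZMod p)) _ _ (fun b => by rw [Equiv.neg_apply])
  have h2 : ∑ b : ZMod p, χ (-b) * (((-b) : ZMod p).val : ℂ)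
      = ∑ b : ZMod p, χ b * ((p : ℂ) - (b.val : ℂ)) := by
    refine Finset.sum_congr rfl fun b _ => ?_
    rcases eq_or_ne b 0 with rfl | hb
    · simp [hzero]
    · rw [hneg b, ZMod.neg_val, if_neg hb, Nat.cast_sub (ZMod.val_lt b).le]
  have hTT : T = -T := by
    conv_lhs => rw [← hrefl, h2]
    simp only [mul_sub]
    rw [Finset.sum_sub_distrib, ← Finset.sum_mul, hsum0, zero_mul, zero_sub]
  exact add_self_eq_zero.mp (by linear_combination hTT)

lemma S_triv {p : ℕ} (hp : p.Prime) :
    ∑ a ∈ Finset.range p, (1 : DirichletCharacter ℂ p) a * a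
      = ((∑ a ∈ Finset.range p, a : ℕ) : ℂ) := by
  rw [Nat.cast_sum]
  refine Finset.sum_congr rfl fun a ha => ?_
  rcases Nat.eq_zero_or_pos a with rfl | hapos
  · simp
  · have hnd : ¬ p ∣ a := fun hd =>
      absurd (Nat.le_of_dvd hapos hd) (not_le.mpr (Finset.mem_range.mp ha))
    have hu : IsUnit ((a : ℕ) : ZMod p) :=
      (ZMod.isUnit_iff_coprime a p).mpr
        (Nat.Coprime.symm ((Nat.Prime.coprime_iff_not_dvd hp).mpr hnd))
    rw [← hu.unit_spec, MulChar.one_apply_coe, one_mul]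

theorem no_identity_even_character (q : ℕ) (hq : q.Prime) (hq4 : q % 4 = 1)
    (hp : (2 * q + 1).Prime) (χ : DirichletCharacter ℂ (2 * q + 1))
    (hχeven : χ (-1) = 1) :
    ¬ ∃ α : ℝ, ∀ n : ℕ, 1 ≤ n →
      ∑ j ∈ Finset.range (n + 1), deltaChar χ j * deltaChar (conjChar χ) (n - j)
        = (α : ℂ) * sigma'pos (2 * q + 1) n := by
  rintro ⟨α, h⟩
  have hq2 : 2 ≤ q := hq.two_le
  have hplt : 2 < 2 * q + 1 := by omega
  have hp1 : 1 < 2 * q + 1 := by omega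
  have h1 := h 1 le_rfl
  have h2 := h 2 (by norm_num)
  simp only [Finset.sum_range_succ, Finset.sum_range_zero, zero_add, Nat.sub_self,
    Nat.sub_zero] at h1 h2
  norm_num at h1 h2
  rw [deltaChar_one', deltaChar_one', sigma'pos_one' hplt] at h1
  rw [deltaChar_one', deltaChar_one', deltaChar_two', deltaChar_two',
    sigma'pos_two' hplt] at h2
  rw [deltaChar_conj_zero] at h1 h2
  by_cases hχ1 : χ = 1
  · subst hχ1
    have hc2 : (1 : DirichletCharacter ℂ (2 * q + 1)) 2 = 1 := by
      have hnd : ¬ (2 * q + 1) ∣ 2 := fun hd => by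
        have := Nat.le_of_dvd two_pos hd; omega
      have hu : IsUnit ((2 : ℕ) : ZMod (2 * q + 1)) :=
        (ZMod.isUnit_iff_coprime 2 (2 * q + 1)).mpr
          (Nat.Coprime.symm ((Nat.Prime.coprime_iff_not_dvd hp).mpr hnd))
      rw [show ((2 : ZMod (2 * q + 1))) = ((2 : ℕ) : ZMod (2 * q + 1)) by push_cast; ring,
        ← hu.unit_spec, MulChar.one_apply_coe]
    have hcreal : (starRingEnd ℂ) (deltaChar (1 : DirichletCharacter ℂ (2 * q + 1)) 0)
        = deltaChar (1 : DirichletCharacter ℂ (2 * q + 1)) 0 := by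
      rw [deltaChar, if_pos rfl, S_triv hp]
      simp [map_ofNat]
    rw [hcreal] at h1 h2
    have hconj1 : conjChar (1 : DirichletCharacter ℂ (2 * q + 1)) = 1 :=
      MulChar.ringHomComp_one _
    rw [hconj1, hc2] at h2
    set c := deltaChar (1 : DirichletCharacter ℂ (2 * q + 1)) 0 with hcdef
    have hchalf : c = 1 / 2 := by linear_combination (-1/2 : ℂ) * h2 + (3/2 : ℂ) * h1
    rw [hcdef, deltaChar, if_pos rfl, S_triv hp] at hchalf
    have hpne : ((2 * q + 1 : ℕ) : ℂ) ≠ 0 := Nat.cast_ne_zero.mpr (by omega)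
    have hfinal : (((∑ a ∈ Finset.range (2 * q + 1), a) + (2 * q + 1) : ℕ) : ℂ) = 0 := by
      push_cast
      push_cast at hpne hchalf
      field_simp at hchalf
      linear_combination (-1 : ℂ) * hchalf
    rw [Nat.cast_eq_zero] at hfinal
    omega
  · have hS := S_eq_zero hp1 χ hχeven hχ1
    have hc0 : deltaChar χ 0 = 0 := by
      rw [deltaChar, if_pos rfl, hS, mul_zero]
    rw [hc0, map_zero] at h1 h2
    simp at h1 h2
    rw [← h1] at h2
    norm_num at h2
end
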